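/- Let F be a totally real Galois extension of ℚ of degree 2^d. Suppose there exists α ∈ F with N_{F/ℚ}(α) < 0 such that the principal ideal (α) is fixed by Gal(F/ℚ). Then for every choice of 2^d signs (±1,…,±1) whose product is +1, there exists a unit of the ring of integers of F whose signs under the real embeddings of F are exactly the given ones. -/

import Mathlib

open MonoidAlgebra

noncomputable def aug (G : Type) [Group G] : MonoidAlgebra (ZMod 2) G →ₐ[ZMod 2] ZMod 2 :=
  MonoidAlgebra.lift (ZMod 2) (ZMod 2) G 1

lemma aug_single {G : Type} [Group G] (g : G) (c : ZMod 2) : aug G (single g c) = c := by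
  simp [aug, MonoidAlgebra.lift_single]

lemma aug_eq_sum {G : Type} [Group G] [Fintype G] (x : MonoidAlgebra (ZMod 2) G) :
    aug G x = ∑ g : G, x.coeff g := by
  rw [aug, MonoidAlgebra.lift_apply, Finsupp.sum_fintype]
  · simp
  · intro g; simp

lemma aug_mapDomain {G H : Type} [Group G] [Group H] (f : G →* H)
    (x : MonoidAlgebra (ZMod 2) G) :
    aug H (MonoidAlgebra.mapDomainRingHom (ZMod 2) f x) = aug G x := by
  have h : ((aug H).toRingHom.comp (MonoidAlgebra.mapDomainRingHom (ZMod 2) f))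
      = (aug G).toRingHom := by
    apply MonoidAlgebra.ringHom_ext <;> intros <;>
      simp [aug_single, Finsupp.mapDomain_single]
  exact RingHom.congr_fun h x

lemma MA_add_self {G : Type} [Group G] (a : MonoidAlgebra (ZMod 2) G) : a + a = 0 := by
  have h2 : ∀ c : ZMod 2, c + c = 0 := by decide
  apply MonoidAlgebra.ext
  apply Finsupp.ext
  intro g
  rw [MonoidAlgebra.coeff_add, Finsupp.add_apply]; simp [h2]

lemma sq_eq_zero_of_ker {G : Type} [Group G] [Fintype G] [DecidableEq G]
    (z : G) (hzc : z ∈ Subgroup.center G) (hz1 : z ≠ 1) (hz2 : z * z = 1)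
    (j : MonoidAlgebra (ZMod 2) G)
    (hj : Finsupp.mapDomain (QuotientGroup.mk (s := Subgroup.zpowers z)) j.coeff = 0) :
    j * j = 0 := by
  classical
  set Z := Subgroup.zpowers z with hZ
  set s : MonoidAlgebra (ZMod 2) G := single z 1 with hs
  have hcomm : ∀ g : G, z * g = g * z := fun g => (Subgroup.mem_center_iff.mp hzc g).symm
  have hzinv : z⁻¹ = z := inv_eq_of_mul_eq_one_right hz2
  have hmemZ : ∀ m : G, m ∈ Z → m = 1 ∨ m = z := by
    intro m hm
    obtain ⟨k, rfl⟩ := Subgroup.mem_zpowers_iff.mp hm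
    have hz2' : z ^ (2 : ℤ) = 1 := by rw [zpow_two]; exact hz2
    have hsplit : z ^ k = z ^ (k % 2) := by
      conv_lhs => rw [← Int.mul_ediv_add_emod k 2]
      rw [zpow_add, zpow_mul, hz2', one_zpow, one_mul]
    rcases Int.emod_two_eq k with h | h <;> rw [hsplit, h] <;> simp
  have fiber : ∀ a b : G, QuotientGroup.mk (s := Z) a = QuotientGroup.mk b →
      b = a ∨ b = z * a := by
    intro a b h
    have hmem : a⁻¹ * b ∈ Z := QuotientGroup.eq.mp h
    rcases hmemZ _ hmem with h1 | h1
    · left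
      have : a * (a⁻¹ * b) = a * 1 := by rw [h1]
      simpa [mul_assoc] using this
    · right
      have : a * (a⁻¹ * b) = a * z := by rw [h1]
      rw [← mul_assoc, mul_inv_cancel, one_mul] at this
      rw [this, hcomm]
  have hmkz : ∀ a : G, QuotientGroup.mk (s := Z) (z * a) = QuotientGroup.mk a := by
    intro a
    rw [QuotientGroup.eq]
    have : (z * a)⁻¹ * a = z := by
      rw [mul_inv_rev, mul_assoc, hzinv, hcomm, ← mul_assoc, inv_mul_cancel, one_mul]
    rw [this]
    exact Subgroup.mem_zpowers z
  have hne : ∀ a : G, a ≠ z * a := by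
    intro a h
    exact hz1 (right_eq_mul.mp h)
  have coeff : ∀ a : G,
      (Finsupp.mapDomain (QuotientGroup.mk (s := Z)) j.coeff) (QuotientGroup.mk a)
        = j.coeff a + j.coeff (z * a) := by
    intro a
    rw [Finsupp.mapDomain, Finsupp.sum_fintype _ _ (fun g => by simp)]
    rw [Finsupp.finset_sum_apply]
    have hterm : ∀ b : G, (Finsupp.single (QuotientGroup.mk (s := Z) b) (j.coeff b))
        (QuotientGroup.mk (s := Z) a)
        = if QuotientGroup.mk (s := Z) b = QuotientGroup.mk a then j.coeff b else 0 :=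
      fun b => Finsupp.single_apply
    rw [Finset.sum_congr rfl (fun b _ => hterm b)]
    have hsub : ({a, z * a} : Finset G) ⊆ Finset.univ := Finset.subset_univ _
    rw [← Finset.sum_subset hsub]
    · rw [Finset.sum_pair (hne a)]
      rw [if_pos rfl, if_pos (hmkz a)]
    · intro b _ hb
      rw [Finset.mem_insert, Finset.mem_singleton] at hb
      push_neg at hb
      rw [if_neg]
      intro hmk
      rcases fiber a b hmk.symm with h | h
      · exact hb.1 h
      · exact hb.2 h
  have key : ∀ a : G, j.coeff (z * a) = j.coeff a := by
    intro a
    have h0 : j.coeff a + j.coeff (z * a) = 0 := by rw [← coeff a, hj]; rfl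
    have h2 : ∀ x y : ZMod 2, x + y = 0 → y = x := by decide
    exact h2 _ _ h0
  set r : MonoidAlgebra (ZMod 2) G := MonoidAlgebra.ofCoeff (Finsupp.equivFunOnFinite.symm
    (fun h => if h = (QuotientGroup.mk (s := Z) h).out then j.coeff h else 0)) with hr
  have hrapp : ∀ h : G, r.coeff h = if h = (QuotientGroup.mk (s := Z) h).out then j.coeff h else 0 := by
    intro h; rw [hr]; rfl
  have hout : ∀ a : G, QuotientGroup.mk (s := Z) ((QuotientGroup.mk (s := Z) a).out) =
      QuotientGroup.mk a := fun a => QuotientGroup.out_eq' _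
  have hdecomp : j = r + s * r := by
    apply MonoidAlgebra.ext
    apply Finsupp.ext
    intro g
    rw [MonoidAlgebra.coeff_add, Finsupp.add_apply]
    rw [hs, MonoidAlgebra.coeff_single_mul_apply, one_mul, hzinv]
    set o := (QuotientGroup.mk (s := Z) g).out with ho
    have houto : (QuotientGroup.mk (s := Z) (z * g)).out = o := by
      rw [ho]; congr 1; exact hmkz g
    rcases fiber g o (hout g).symm with hcase | hcase
    · have h1 : r.coeff g = j.coeff g := by
        rw [hrapp, if_pos (show g = (QuotientGroup.mk (s := Z) g).out by rw [← ho, hcase])]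
      have h2 : r.coeff (z * g) = 0 := by
        rw [hrapp, if_neg]
        intro hh
        rw [houto] at hh
        exact hne g ((hh.trans hcase).symm ▸ hh.trans hcase ▸ rfl)
      rw [h1, h2, add_zero]
    · have h1 : r.coeff g = 0 := by
        rw [hrapp, if_neg]
        intro hh
        rw [← ho] at hh
        rw [hcase] at hh
        exact hne g hh
      have h2 : r.coeff (z * g) = j.coeff g := by
        rw [hrapp, if_pos (show z * g = (QuotientGroup.mk (s := Z) (z * g)).out
          by rw [houto, hcase])]
        exact key g
      rw [h1, h2, zero_add]
  have hscomm : ∀ f : MonoidAlgebra (ZMod 2) G, s * f = f * s := by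
    intro f
    apply MonoidAlgebra.ext
    apply Finsupp.ext
    intro y
    rw [hs, MonoidAlgebra.coeff_single_mul_apply, MonoidAlgebra.coeff_mul_single_apply, one_mul, mul_one]
    congr 1
    rw [hzinv, hcomm]
  have hss : s * s = 1 := by
    rw [hs, MonoidAlgebra.single_mul_single, hz2, mul_one, MonoidAlgebra.one_def]
  have h1s : (1 + s) * (1 + s) = 0 := by
    have e : (1 + s) * (1 + s) = (1 + s * s) + (s + s) := by noncomm_ring
    rw [e, hss, MA_add_self, MA_add_self, zero_add]
  have hj1s : j = (1 + s) * r := by rw [add_mul, one_mul, ← hdecomp]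
  rw [hj1s]
  calc (1 + s) * r * ((1 + s) * r) = (1 + s) * (r * (1 + s)) * r := by noncomm_ring
    _ = (1 + s) * ((1 + s) * r) * r := by
        congr 2
        rw [mul_add, add_mul, mul_one, one_mul, hscomm]
    _ = 0 := by rw [← mul_assoc, h1s, zero_mul, zero_mul]

lemma exists_central_order_two (G : Type) [Group G] [Fintype G] [Nontrivial G]
    (d : ℕ) (hcard : Fintype.card G = 2 ^ d) :
    ∃ z : G, z ∈ Subgroup.center G ∧ z ≠ 1 ∧ z * z = 1 := by
  have hp : IsPGroup 2 G := IsPGroup.of_card (n := d) (by rw [Nat.card_eq_fintype_card, hcard])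
  have : Nontrivial (Subgroup.center G) := IsPGroup.center_nontrivial hp
  haveI : Fintype (Subgroup.center G) := Fintype.ofFinite _
  obtain ⟨z', hz'⟩ := exists_ne (1 : Subgroup.center G)
  have hdvd : orderOf z' ∣ 2 ^ d := by
    have := orderOf_dvd_card (x := z')
    have hc : Fintype.card (Subgroup.center G) ∣ Fintype.card G := by
      have := Subgroup.card_subgroup_dvd_card (Subgroup.center G)
      simpa [Nat.card_eq_fintype_card] using this
    exact (this.trans hc).trans (dvd_of_eq hcard)
  obtain ⟨k, hk, hko⟩ := (Nat.dvd_prime_pow Nat.prime_two).mp hdvd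
  have hk1 : 1 ≤ k := by
    rcases Nat.eq_zero_or_pos k with h | h
    · exfalso; apply hz'; subst h; simpa using orderOf_eq_one_iff.mp (by simpa using hko)
    · exact h
  set w := z' ^ (2 ^ (k - 1)) with hw
  have hw2 : w * w = 1 := by
    rw [hw, ← pow_add, ← two_mul, ← pow_succ']
    have : k - 1 + 1 = k := Nat.succ_pred_eq_of_pos hk1
    rw [this, ← hko, pow_orderOf_eq_one]
  have hw1 : w ≠ 1 := by
    intro h
    have : orderOf z' ∣ 2 ^ (k - 1) := orderOf_dvd_of_pow_eq_one h
    rw [hko] at this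
    have := Nat.le_of_dvd (Nat.pow_pos (by norm_num)) this
    have h2 : 2 ^ (k - 1) < 2 ^ k := Nat.pow_lt_pow_right (by norm_num) (Nat.sub_lt hk1 one_pos)
    omega
  refine ⟨(w : G), (w : Subgroup.center G).2, ?_, ?_⟩
  · intro h; apply hw1; exact Subtype.ext h
  · rw [← Subgroup.coe_mul, hw2, Subgroup.coe_one]


lemma isUnit_of_aug_one (d : ℕ) : ∀ (G : Type) [Group G] [Fintype G] [DecidableEq G],
    Fintype.card G = 2 ^ d → ∀ x : MonoidAlgebra (ZMod 2) G, aug G x = 1 → IsUnit x := by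
  induction d with
  | zero =>
    intro G _ _ _ hcard x hx
    have hsub : Subsingleton G := by
      rw [pow_zero] at hcard
      exact Fintype.card_le_one_iff_subsingleton.mp (le_of_eq hcard)
    have hxs : x = MonoidAlgebra.single 1 (x.coeff 1) := by
      apply MonoidAlgebra.ext
      apply Finsupp.ext
      intro a
      have : a = 1 := Subsingleton.elim a 1
      rw [this]
      simp [MonoidAlgebra.coeff_single]
    have h1 : x.coeff 1 = 1 := by
      rw [hxs, aug_single] at hx
      exact hx
    rw [hxs, h1, ← MonoidAlgebra.one_def]
    exact isUnit_one
  | succ d ih =>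
    intro G _ _ _ hcard x hx
    have hnt : Nontrivial G := by
      apply Fintype.one_lt_card_iff_nontrivial.mp
      rw [hcard]
      exact Nat.one_lt_two_pow (by omega)
    obtain ⟨z, hzc, hz1, hz2⟩ := exists_central_order_two G (d + 1) hcard
    set Z := Subgroup.zpowers z with hZ
    have hZle : Z ≤ Subgroup.center G := (Subgroup.zpowers_le).mpr hzc
    haveI hZn : Z.Normal := by
      constructor
      intro n hn g
      have hcn : n ∈ Subgroup.center G := hZle hn
      have hcg : g * n = n * g := Subgroup.mem_center_iff.mp hcn g
      have : g * n * g⁻¹ = n := by rw [hcg, mul_assoc, mul_inv_cancel, mul_one]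
      rwa [this]
    haveI : Fintype (G ⧸ Z) := Fintype.ofFinite _
    haveI : DecidableEq (G ⧸ Z) := Classical.decEq _
    have hordz : orderOf z = 2 := by
      apply orderOf_eq_prime
      · rw [pow_two]; exact hz2
      · exact hz1
    have hcardZ : Nat.card Z = 2 := by rw [Nat.card_zpowers, hordz]
    have hcardQ : Fintype.card (G ⧸ Z) = 2 ^ d := by
      have h := Subgroup.card_eq_card_quotient_mul_card_subgroup Z
      rw [hcardZ, Nat.card_eq_fintype_card, Nat.card_eq_fintype_card, hcard] at h
      have : 2 ^ (d + 1) = 2 ^ d * 2 := by ring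
      omega
    set π : G →* G ⧸ Z := QuotientGroup.mk' Z with hπ
    set Φ : MonoidAlgebra (ZMod 2) G →+* MonoidAlgebra (ZMod 2) (G ⧸ Z) :=
      MonoidAlgebra.mapDomainRingHom (ZMod 2) π with hΦ
    have hΦapp : ∀ v : MonoidAlgebra (ZMod 2) G,
        (Φ v).coeff = Finsupp.mapDomain (QuotientGroup.mk (s := Z)) v.coeff := by
      intro v; rfl
    have haugΦ : aug (G ⧸ Z) (Φ x) = 1 := by rw [hΦ, aug_mapDomain]; exact hx
    obtain ⟨U, hU⟩ := ih (G ⧸ Z) hcardQ (Φ x) haugΦ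
    set y : MonoidAlgebra (ZMod 2) G :=
      MonoidAlgebra.ofCoeff (Finsupp.mapDomain (Quotient.out : G ⧸ Z → G) (↑U⁻¹ : MonoidAlgebra (ZMod 2) (G ⧸ Z)).coeff)
      with hy
    have hΦy : Φ y = ↑U⁻¹ := by
      apply MonoidAlgebra.ext
      rw [hΦapp, hy, MonoidAlgebra.coeff_ofCoeff, ← Finsupp.mapDomain_comp]
      have hco : (QuotientGroup.mk (s := Z)) ∘ (Quotient.out : G ⧸ Z → G) = id := by
        funext q
        exact QuotientGroup.out_eq' q
      rw [hco, Finsupp.mapDomain_id]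
    set j : MonoidAlgebra (ZMod 2) G := 1 + y * x with hj
    set j2 : MonoidAlgebra (ZMod 2) G := 1 + x * y with hj2
    have hΦj : Finsupp.mapDomain (QuotientGroup.mk (s := Z)) j.coeff = 0 := by
      rw [← hΦapp, hj, map_add, map_mul, map_one, hΦy, ← hU, Units.inv_mul]
      exact congrArg MonoidAlgebra.coeff (MA_add_self 1)
    have hΦj2 : Finsupp.mapDomain (QuotientGroup.mk (s := Z)) j2.coeff = 0 := by
      rw [← hΦapp, hj2, map_add, map_mul, map_one, hΦy, ← hU, Units.mul_inv]
      exact congrArg MonoidAlgebra.coeff (MA_add_self 1)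
    have hjj : j * j = 0 := sq_eq_zero_of_ker z hzc hz1 hz2 j hΦj
    have hjj2 : j2 * j2 = 0 := sq_eq_zero_of_ker z hzc hz1 hz2 j2 hΦj2
    have hyx : y * x = 1 + j := by
      rw [hj, ← add_assoc, MA_add_self, zero_add]
    have hxy : x * y = 1 + j2 := by
      rw [hj2, ← add_assoc, MA_add_self, zero_add]
    have h1j : (1 + j) * (1 + j) = 1 := by
      have e : (1 + j) * (1 + j) = 1 + (j + j) + j * j := by noncomm_ring
      rw [e, MA_add_self, add_zero, hjj, add_zero]
    have h1j2 : (1 + j2) * (1 + j2) = 1 := by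
      have e : (1 + j2) * (1 + j2) = 1 + (j2 + j2) + j2 * j2 := by noncomm_ring
      rw [e, MA_add_self, add_zero, hjj2, add_zero]
    set a : MonoidAlgebra (ZMod 2) G := (1 + j) * y with ha
    set b : MonoidAlgebra (ZMod 2) G := y * (1 + j2) with hb
    have hax : a * x = 1 := by rw [ha, mul_assoc, hyx, h1j]
    have hxb : x * b = 1 := by rw [hb, ← mul_assoc, hxy, h1j2]
    have hab : a = b := by
      calc a = a * (x * b) := by rw [hxb, mul_one]
        _ = (a * x) * b := (mul_assoc a x b).symm
        _ = b := by rw [hax, one_mul]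
    exact ⟨⟨x, a, by rw [hab]; exact hxb, hax⟩, rfl⟩

lemma mem_of_aug_zero {G : Type} [Group G] [Fintype G] [DecidableEq G] (d : ℕ)
    (hcard : Fintype.card G = 2 ^ d)
    (V : AddSubgroup (MonoidAlgebra (ZMod 2) G)) (t : MonoidAlgebra (ZMod 2) G)
    (ht : aug G t = 1)
    (hgen : ∀ g : G, (1 + MonoidAlgebra.single g 1) * t ∈ V)
    (w : MonoidAlgebra (ZMod 2) G) (hw : aug G w = 0) : w ∈ V := by
  obtain ⟨T, hT⟩ := isUnit_of_aug_one d G hcard t ht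
  set i := w * ↑T⁻¹ with hi
  have hit : i * t = w := by rw [hi, mul_assoc, ← hT, Units.inv_mul, mul_one]
  have haugi : aug G i = 0 := by
    rw [hi, map_mul, hw, zero_mul]
  have hisum : (∑ g : G, MonoidAlgebra.single g (i.coeff g)) = i := by
    apply MonoidAlgebra.ext
    rw [MonoidAlgebra.coeff_sum]
    simp only [MonoidAlgebra.coeff_single]
    rw [← Finsupp.sum_fintype _ _ (fun g => Finsupp.single_zero g)]
    exact Finsupp.sum_single i.coeff
  have hwsum : w = ∑ g : G, (i.coeff g) • ((1 + MonoidAlgebra.single g 1) * t) := by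
    have e1 : ∀ g : G, (i.coeff g) • ((1 + MonoidAlgebra.single g 1) * t)
        = (i.coeff g) • t + (MonoidAlgebra.single g (i.coeff g)) * t := by
      intro g
      rw [add_mul, one_mul, smul_add]
      congr 1
      rw [← smul_mul_assoc]
      congr 1
      rw [MonoidAlgebra.smul_single, smul_eq_mul, mul_one]
    rw [Finset.sum_congr rfl (fun g _ => e1 g), Finset.sum_add_distrib]
    rw [← Finset.sum_smul, ← aug_eq_sum, haugi, zero_smul, zero_add]
    rw [← Finset.sum_mul, hisum, hit]
  rw [hwsum]
  apply AddSubgroup.sum_mem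
  intro g _
  have hc : ∀ c : ZMod 2, c = 0 ∨ c = 1 := by decide
  rcases hc (i.coeff g) with h | h <;> rw [h]
  · rw [zero_smul]; exact V.zero_mem
  · rw [one_smul]; exact hgen g

noncomputable def negbit (x : ℝ) : ZMod 2 := if x < 0 then 1 else 0

lemma negbit_mul {x y : ℝ} (hx : x ≠ 0) (hy : y ≠ 0) :
    negbit (x * y) = negbit x + negbit y := by
  rcases lt_or_gt_of_ne hx with h1 | h1 <;> rcases lt_or_gt_of_ne hy with h2 | h2 <;>
    unfold negbit
  · rw [if_neg (not_lt.mpr (mul_pos_of_neg_of_neg h1 h2).le), if_pos h1, if_pos h2]; decide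
  · rw [if_pos (mul_neg_of_neg_of_pos h1 h2), if_pos h1, if_neg (not_lt.mpr h2.le)]; decide
  · rw [if_pos (mul_neg_of_pos_of_neg h1 h2), if_neg (not_lt.mpr h1.le), if_pos h2]; decide
  · rw [if_neg (not_lt.mpr (mul_pos h1 h2).le), if_neg (not_lt.mpr h1.le),
      if_neg (not_lt.mpr h2.le)]; decide

lemma negbit_prod {ι : Type} (s : Finset ι) (f : ι → ℝ) (h : ∀ i ∈ s, f i ≠ 0) :
    negbit (∏ i ∈ s, f i) = ∑ i ∈ s, negbit (f i) := by
  classical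
  induction s using Finset.induction_on with
  | empty => simp [negbit]; norm_num
  | @insert a s ha ih =>
    rw [Finset.prod_insert ha, Finset.sum_insert ha,
      negbit_mul (h a (Finset.mem_insert_self a s))
        (Finset.prod_ne_zero_iff.mpr (fun i hi => h i (Finset.mem_insert_of_mem hi))),
      ih (fun i hi => h i (Finset.mem_insert_of_mem hi))]


/-- Generalized Weber lemma: let `F/ℚ` be totally real Galois of degree `2^d`, and
`α ∈ F` with `N_{F/ℚ}(α) < 0` whose principal ideal `(α)` is Galois-stable.  Then for
every sequence of signs `±1` indexed by the real embeddings of `F` whose product is `+1`,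
there is a unit of `O_F` realizing exactly these signs. -/
theorem units_of_all_even_signatures (F : Type) [Field F] [NumberField F] [IsGalois ℚ F]
    (d : ℕ) (hdeg : Module.finrank ℚ F = 2 ^ d)
    (htotreal : ∀ (φ : F →+* ℂ) (x : F), (φ x).im = 0)
    (α : F) (hα : α ≠ 0) (hneg : Algebra.norm ℚ α < 0)
    (hfix : ∀ g : F ≃ₐ[ℚ] F, ∃ u : (NumberField.RingOfIntegers F)ˣ,
      g α = ((u : NumberField.RingOfIntegers F) : F) * α)
    [Fintype (F →+* ℝ)]
    (S : (F →+* ℝ) → ℝ) (hS : ∀ φ, S φ = 1 ∨ S φ = -1)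
    (hprod : ∏ φ : F →+* ℝ, S φ = 1) :
    ∃ ε : (NumberField.RingOfIntegers F)ˣ, ∀ φ : F →+* ℝ,
      Real.sign (φ ((ε : NumberField.RingOfIntegers F) : F)) = S φ := by
  classical
  set G := (F ≃ₐ[ℚ] F) with hG
  haveI : Fintype G := AlgEquiv.fintype ℚ F
  haveI : DecidableEq G := Classical.decEq _
  have hcardG : Fintype.card G = 2 ^ d := by
    have h := IsGalois.card_aut_eq_finrank ℚ F
    rw [hdeg] at h
    rw [← Nat.card_eq_fintype_card]; exact h
  -- all complex embeddings are real
  have hre : ∀ φ : F →+* ℂ, NumberField.ComplexEmbedding.IsReal φ := by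
    intro φ
    rw [NumberField.ComplexEmbedding.isReal_iff]
    ext x
    rw [NumberField.ComplexEmbedding.conjugate_coe_eq]
    exact Complex.conj_eq_iff_im.mpr (htotreal φ x)
  set eRC : (F →+* ℝ) ≃ (F →+* ℂ) :=
    { toFun := fun ψ => Complex.ofRealHom.comp ψ
      invFun := fun φ => (hre φ).embedding
      left_inv := by
        intro ψ
        ext x
        beta_reduce
        apply Complex.ofReal_injective
        rw [NumberField.ComplexEmbedding.IsReal.coe_embedding_apply
          (hre (Complex.ofRealHom.comp ψ)) x]
        rfl
      right_inv := by
        intro φ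
        ext x
        exact NumberField.ComplexEmbedding.IsReal.coe_embedding_apply (hre φ) x } with heRC
  -- the product of the real embeddings of α is negative
  have hprodneg : (∏ ψ : F →+* ℝ, ψ α) < 0 := by
    have h1 : (algebraMap ℚ ℂ) (Algebra.norm ℚ α) = ∏ σ : F →ₐ[ℚ] ℂ, σ α :=
      Algebra.norm_eq_prod_embeddings ℚ ℂ α
    have h2 : ∏ φ : F →+* ℂ, φ α = ∏ σ : F →ₐ[ℚ] ℂ, σ α :=
      Fintype.prod_equiv (RingHom.equivRatAlgHom F ℂ) (fun φ => φ α) (fun σ => σ α) (fun φ => rfl)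
    have h3 : ∏ ψ : F →+* ℝ, ((ψ α : ℝ) : ℂ) = ∏ φ : F →+* ℂ, φ α :=
      Fintype.prod_equiv eRC (fun ψ => ((ψ α : ℝ) : ℂ)) (fun φ => φ α) (fun ψ => rfl)
    have h4 : ((Algebra.norm ℚ α : ℚ) : ℝ) = ∏ ψ : F →+* ℝ, ψ α := by
      apply Complex.ofReal_injective
      rw [show ((((Algebra.norm ℚ α : ℚ) : ℝ)) : ℂ)
          = (algebraMap ℚ ℂ) (Algebra.norm ℚ α) by push_cast; rfl]
      rw [h1, ← h2, ← h3]
      exact (map_prod Complex.ofRealHom _ _).symm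
    rw [← h4]
    exact_mod_cast hneg
  -- base real embedding and the bijection with the Galois group
  have hcardR : Fintype.card (F →+* ℝ) = 2 ^ d := by
    rw [Fintype.card_congr eRC, NumberField.Embeddings.card F ℂ, hdeg]
  have hne : Nonempty (F →+* ℝ) := by
    apply Fintype.card_pos_iff.mp
    rw [hcardR]
    positivity
  obtain ⟨ψ₀⟩ := hne
  set β : G → (F →+* ℝ) := fun g => ψ₀.comp (g⁻¹ : F ≃ₐ[ℚ] F).toAlgHom.toRingHom with hβ
  have hβapp : ∀ (g : G) (x : F), β g x = ψ₀ ((g⁻¹ : F ≃ₐ[ℚ] F) x) := fun g x => rfl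
  have hβbij : Function.Bijective β := by
    rw [Fintype.bijective_iff_injective_and_card]
    constructor
    · intro g h hgh
      have : ∀ x : F, ψ₀ ((g⁻¹ : F ≃ₐ[ℚ] F) x) = ψ₀ ((h⁻¹ : F ≃ₐ[ℚ] F) x) := by
        intro x
        rw [← hβapp, ← hβapp, hgh]
      have h2 : (g⁻¹ : F ≃ₐ[ℚ] F) = (h⁻¹ : F ≃ₐ[ℚ] F) := by
        apply AlgEquiv.ext
        intro x
        exact ψ₀.injective (this x)
      exact inv_injective h2
    · rw [hcardG, hcardR]
  -- the sign vector of α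
  set T : MonoidAlgebra (ZMod 2) G :=
    MonoidAlgebra.ofCoeff (Finsupp.equivFunOnFinite.symm (fun g => negbit (β g α))) with hT
  have hTapp : ∀ g : G, T.coeff g = negbit (β g α) := fun g => rfl
  have hψne : ∀ (ψ : F →+* ℝ) (x : F), x ≠ 0 → ψ x ≠ 0 := by
    intro ψ x hx
    exact (map_ne_zero ψ).mpr hx
  have haugT : aug G T = 1 := by
    rw [aug_eq_sum]
    have h1 : ∑ g : G, T.coeff g = ∑ ψ : F →+* ℝ, negbit (ψ α) :=
      Fintype.sum_bijective β hβbij _ _ (fun g => rfl)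
    rw [h1, ← negbit_prod Finset.univ _ (fun ψ _ => hψne ψ α hα)]
    unfold negbit
    rw [if_pos hprodneg]
  -- the subgroup of sign vectors of units
  have hcoe_ne : ∀ ε : (NumberField.RingOfIntegers F)ˣ,
      ((ε : NumberField.RingOfIntegers F) : F) ≠ 0 := fun ε =>
    NumberField.RingOfIntegers.coe_ne_zero_iff.mpr (Units.ne_zero ε)
  set V : AddSubgroup (MonoidAlgebra (ZMod 2) G) :=
    { carrier := {v | ∃ ε : (NumberField.RingOfIntegers F)ˣ,
        ∀ g : G, v.coeff g = negbit (β g ((ε : NumberField.RingOfIntegers F) : F))}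
      zero_mem' := by
        refine ⟨1, fun g => ?_⟩
        have : ((((1 : (NumberField.RingOfIntegers F)ˣ) :
            NumberField.RingOfIntegers F)) : F) = 1 := by
          rw [Units.val_one]
          exact map_one (algebraMap (NumberField.RingOfIntegers F) F)
        rw [this, map_one]
        show (0 : ZMod 2) = negbit 1
        unfold negbit
        rw [if_neg (by norm_num)]
      add_mem' := by
        rintro a b ⟨εa, ha⟩ ⟨εb, hb⟩
        refine ⟨εa * εb, fun g => ?_⟩
        have hmul : (((εa * εb : (NumberField.RingOfIntegers F)ˣ) :
            NumberField.RingOfIntegers F) : F)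
            = ((εa : NumberField.RingOfIntegers F) : F) *
              ((εb : NumberField.RingOfIntegers F) : F) := by
          rw [Units.val_mul]
          exact map_mul (algebraMap (NumberField.RingOfIntegers F) F) _ _
        rw [MonoidAlgebra.coeff_add, Finsupp.add_apply, ha g, hb g, hmul, map_mul,
          negbit_mul (hψne _ _ (hcoe_ne εa)) (hψne _ _ (hcoe_ne εb))]
      neg_mem' := by
        rintro a ⟨εa, ha⟩
        refine ⟨εa, fun g => ?_⟩
        rw [MonoidAlgebra.coeff_neg, Finsupp.neg_apply, ha g]
        exact (by decide : ∀ c : ZMod 2, -c = c) _ } with hV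
  -- the generators lie in V
  have hgen : ∀ g : G, (1 + MonoidAlgebra.single g (1 : ZMod 2)) * T ∈ V := by
    intro g
    obtain ⟨u, hu⟩ := hfix g
    refine ⟨u, fun h => ?_⟩
    have happ : ((1 + MonoidAlgebra.single g (1 : ZMod 2)) * T).coeff h = T.coeff h + T.coeff (g⁻¹ * h) := by
      rw [add_mul, one_mul, MonoidAlgebra.coeff_add, Finsupp.add_apply, MonoidAlgebra.coeff_single_mul_apply, one_mul]
    rw [happ, hTapp, hTapp]
    have e0 : ((g⁻¹ * h)⁻¹ : G) = h⁻¹ * g := by rw [mul_inv_rev, inv_inv]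
    have e1 : β (g⁻¹ * h) α = ψ₀ (((h⁻¹ * g : G) : F ≃ₐ[ℚ] F) α) := by
      rw [hβapp, e0]
    have e2 : ((h⁻¹ * g : G) : F ≃ₐ[ℚ] F) α
        = (h⁻¹ : F ≃ₐ[ℚ] F) ((u : NumberField.RingOfIntegers F) : F)
          * (h⁻¹ : F ≃ₐ[ℚ] F) α := by
      rw [AlgEquiv.mul_apply, hu, map_mul]
    have hune : (h⁻¹ : F ≃ₐ[ℚ] F) ((u : NumberField.RingOfIntegers F) : F) ≠ 0 := by
      rw [map_ne_zero]
      exact hcoe_ne u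
    have hαne : (h⁻¹ : F ≃ₐ[ℚ] F) α ≠ 0 := by rw [map_ne_zero]; exact hα
    rw [e1, e2, map_mul, negbit_mul (hψne _ _ hune) (hψne _ _ hαne)]
    rw [hβapp, hβapp]
    exact (by decide : ∀ a b : ZMod 2, a + (b + a) = b) _ _
  -- the target sign vector
  set w : MonoidAlgebra (ZMod 2) G :=
    MonoidAlgebra.ofCoeff (Finsupp.equivFunOnFinite.symm (fun g => negbit (S (β g)))) with hw
  have haugw : aug G w = 0 := by
    rw [aug_eq_sum]
    have h1 : ∑ g : G, w.coeff g = ∑ ψ : F →+* ℝ, negbit (S ψ) :=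
      Fintype.sum_bijective β hβbij _ _ (fun g => rfl)
    have h2 : ∀ ψ : F →+* ℝ, S ψ ≠ 0 := by
      intro ψ
      rcases hS ψ with h | h <;> rw [h] <;> norm_num
    rw [h1, ← negbit_prod Finset.univ _ (fun ψ _ => h2 ψ), hprod]
    unfold negbit
    rw [if_neg (by norm_num)]
  obtain ⟨ε, hε⟩ := mem_of_aug_zero d hcardG V T haugT hgen w haugw
  refine ⟨ε, ?_⟩
  intro φ
  obtain ⟨g, rfl⟩ := hβbij.surjective φ
  have h1 : negbit (S (β g)) = negbit (β g ((ε : NumberField.RingOfIntegers F) : F)) := hε g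
  have hεne : β g ((ε : NumberField.RingOfIntegers F) : F) ≠ 0 := hψne _ _ (hcoe_ne ε)
  rcases hS (β g) with h | h <;> rw [h] at h1 ⊢
  · have h0 : negbit (β g ((ε : NumberField.RingOfIntegers F) : F)) = 0 := by
      rw [← h1]
      unfold negbit
      rw [if_neg (by norm_num)]
    have hpos : 0 < β g ((ε : NumberField.RingOfIntegers F) : F) := by
      rcases lt_or_gt_of_ne hεne with hlt | hgt
      · exfalso
        rw [show negbit (β g ((ε : NumberField.RingOfIntegers F) : F)) = 1 by
          unfold negbit; rw [if_pos hlt]] at h0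
        exact (by decide : (1 : ZMod 2) ≠ 0) h0
      · exact hgt
    exact Real.sign_of_pos hpos
  · have h0 : negbit (β g ((ε : NumberField.RingOfIntegers F) : F)) = 1 := by
      rw [← h1]
      unfold negbit
      rw [if_pos (by norm_num)]
    have hneg' : β g ((ε : NumberField.RingOfIntegers F) : F) < 0 := by
      rcases lt_or_gt_of_ne hεne with hlt | hgt
      · exact hlt
      · exfalso
        rw [show negbit (β g ((ε : NumberField.RingOfIntegers F) : F)) = 0 by
          unfold negbit; rw [if_neg (not_lt.mpr hgt.le)]] at h0
        exact (by decide : (0 : ZMod 2) ≠ 1) h0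
    exact Real.sign_of_neg hneg'
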